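/- Uncertainty principle for conditioned observables: for real-valued observables B, C conditioned on A relative to an instrument 𝓘, writing X = (B|A)~ and Y = (C|A)~ for the stochastic operators, one has (1/4)|tr(ρ[X,Y])|² + [Δ_ρ(B,C|A)]² = |Cor_ρ(B,C|A)|² ≤ Δ_ρ(B|A)·Δ_ρ(C|A). -/

import Mathlib

open scoped ComplexOrder

open Matrix BigOperators

/-- An effect on a finite-dimensional Hilbert space: `0 ≤ a ≤ I`. -/
def IsEffect {n : ℕ} (a : Matrix (Fin n) (Fin n) ℂ) : Prop :=
  a.PosSemidef ∧ (1 - a).PosSemidef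

/-- A state: positive operator of trace one. -/
def IsState {n : ℕ} (ρ : Matrix (Fin n) (Fin n) ℂ) : Prop :=
  ρ.PosSemidef ∧ ρ.trace = 1

/-- The stochastic operator `(B|A)~ = Σ_y y·(B|A)_y` of the real-valued observable
`B` conditioned on `A` relative to an instrument with dual maps `D_x`. -/
noncomputable def condStoch {n : ℕ} {X : Type*} [Fintype X]
    (D : X → Matrix (Fin n) (Fin n) ℂ →ₗ[ℂ] Matrix (Fin n) (Fin n) ℂ)
    (ΩB : Finset ℝ) (B : ℝ → Matrix (Fin n) (Fin n) ℂ) : Matrix (Fin n) (Fin n) ℂ :=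
  ∑ y ∈ ΩB, (y : ℂ) • ∑ x, D x (B y)

/-- The ρ-correlation `tr[ρXY] − tr(ρX)·tr(ρY)` of two (stochastic) operators. -/
noncomputable def corr {n : ℕ} (ρ X Y : Matrix (Fin n) (Fin n) ℂ) : ℂ :=
  (ρ * (X * Y)).trace - (ρ * X).trace * (ρ * Y).trace

/- ### Auxiliary lemmas -/

/-- Matrices as vectors in a Euclidean space. -/
noncomputable def toE {n : ℕ} (A : Matrix (Fin n) (Fin n) ℂ) :
    EuclideanSpace ℂ (Fin n × Fin n) := WithLp.toLp 2 fun p : Fin n × Fin n => A p.1 p.2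

lemma inner_toE {n : ℕ} (A B : Matrix (Fin n) (Fin n) ℂ) :
    (inner ℂ (toE A) (toE B) : ℂ) = (Aᴴ * B).trace := by
  simp [toE, PiLp.inner_apply, RCLike.inner_apply, Matrix.trace, Matrix.mul_apply,
    Matrix.conjTranspose_apply, Matrix.diag, Fintype.sum_prod_type]
  rw [Finset.sum_comm]
  exact Finset.sum_congr rfl fun _ _ => Finset.sum_congr rfl fun _ _ => mul_comm _ _

open scoped MatrixOrder in
/-- Cauchy–Schwarz for the sesquilinear form `(M, N) ↦ tr(ρ Mᴴ N)`. -/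
lemma trace_cs {n : ℕ} {ρ : Matrix (Fin n) (Fin n) ℂ} (hρ : ρ.PosSemidef)
    (M N : Matrix (Fin n) (Fin n) ℂ) :
    ‖(ρ * (Mᴴ * N)).trace‖ ^ 2 ≤
      ((ρ * (Mᴴ * M)).trace).re * ((ρ * (Nᴴ * N)).trace).re := by
  set S := CFC.sqrt ρ with hS
  have hSH : Sᴴ = S := (CFC.sqrt_nonneg ρ).isSelfAdjoint
  have key : ∀ P Q : Matrix (Fin n) (Fin n) ℂ,
      (ρ * (Pᴴ * Q)).trace = ((P * S)ᴴ * (Q * S)).trace := by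
    intro P Q
    rw [← CFC.sqrt_mul_sqrt_self ρ hρ.nonneg]
    rw [Matrix.conjTranspose_mul, hSH]
    rw [show S * S * (Pᴴ * Q) = S * (S * Pᴴ * Q) by noncomm_ring]
    rw [Matrix.trace_mul_comm]
    noncomm_ring
  rw [key M N, key M M, key N N, ← inner_toE, ← inner_toE, ← inner_toE]
  have h1 := norm_inner_le_norm (𝕜 := ℂ) (toE (M * S)) (toE (N * S))
  have h2 := inner_self_eq_norm_sq (𝕜 := ℂ) (toE (M * S))
  have h3 := inner_self_eq_norm_sq (𝕜 := ℂ) (toE (N * S))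
  rw [RCLike.re_to_complex] at h2 h3
  rw [h2, h3]
  calc ‖(inner ℂ (toE (M*S)) (toE (N*S)) : ℂ)‖ ^ 2
      ≤ (‖toE (M*S)‖ * ‖toE (N*S)‖)^2 := by
        apply pow_le_pow_left₀ (norm_nonneg _) h1
    _ = ‖toE (M*S)‖^2 * ‖toE (N*S)‖^2 := by ring

/-- The stochastic operator of a real-valued observable is self-adjoint. -/
lemma condStoch_herm {n : ℕ} {X : Type*} [Fintype X]
    (D : X → Matrix (Fin n) (Fin n) ℂ →ₗ[ℂ] Matrix (Fin n) (Fin n) ℂ)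
    (hDpos : ∀ x, ∀ M : Matrix (Fin n) (Fin n) ℂ, M.PosSemidef → (D x M).PosSemidef)
    (ΩB : Finset ℝ) (B : ℝ → Matrix (Fin n) (Fin n) ℂ)
    (hB : ∀ y ∈ ΩB, IsEffect (B y)) :
    (condStoch D ΩB B)ᴴ = condStoch D ΩB B := by
  rw [condStoch, Matrix.conjTranspose_sum]
  refine Finset.sum_congr rfl fun y hy => ?_
  rw [Matrix.conjTranspose_smul, Matrix.conjTranspose_sum]
  congr 1
  · simp
  · exact Finset.sum_congr rfl fun x _ => (hDpos x (B y) (hB y hy).1).isHermitian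

/-- Expansion of the trace of the product of centered operators. -/
lemma center_trace {n : ℕ} {ρ : Matrix (Fin n) (Fin n) ℂ} (htr : ρ.trace = 1)
    (P Q : Matrix (Fin n) (Fin n) ℂ) (a b : ℂ) :
    (ρ * ((P - a • 1) * (Q - b • 1))).trace =
      (ρ * (P * Q)).trace - b * (ρ * P).trace - a * (ρ * Q).trace + a * b := by
  simp [Matrix.mul_sub, Matrix.sub_mul, Matrix.mul_smul, Matrix.smul_mul,
    Matrix.mul_one, Matrix.trace_sub, Matrix.trace_smul, smul_eq_mul, htr]
  ring

theorem uncertainty_principle_conditioned {n : ℕ} {X : Type*} [Fintype X]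
    (I : X → Matrix (Fin n) (Fin n) ℂ →ₗ[ℂ] Matrix (Fin n) (Fin n) ℂ)
    (D : X → Matrix (Fin n) (Fin n) ℂ →ₗ[ℂ] Matrix (Fin n) (Fin n) ℂ)
    (A : X → Matrix (Fin n) (Fin n) ℂ)
    (hA : ∀ x, IsEffect (A x)) (hAsum : ∑ x, A x = 1)
    (hId : ∀ x, ∀ ρ M : Matrix (Fin n) (Fin n) ℂ,
      (I x ρ * M).trace = (ρ * D x M).trace)
    (hDpos : ∀ x, ∀ M : Matrix (Fin n) (Fin n) ℂ, M.PosSemidef → (D x M).PosSemidef)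
    (hmeas : ∀ x, D x 1 = A x)
    (ΩB ΩC : Finset ℝ) (B C : ℝ → Matrix (Fin n) (Fin n) ℂ)
    (hB : ∀ y ∈ ΩB, IsEffect (B y)) (hBsum : ∑ y ∈ ΩB, B y = 1)
    (hC : ∀ z ∈ ΩC, IsEffect (C z)) (hCsum : ∑ z ∈ ΩC, C z = 1)
    (ρ : Matrix (Fin n) (Fin n) ℂ) (hρ : IsState ρ) :
    (1 / 4) * ‖(ρ * (condStoch D ΩB B * condStoch D ΩC C -
          condStoch D ΩC C * condStoch D ΩB B)).trace‖ ^ 2 +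
        (corr ρ (condStoch D ΩB B) (condStoch D ΩC C)).re ^ 2 =
      ‖corr ρ (condStoch D ΩB B) (condStoch D ΩC C)‖ ^ 2 ∧
    ‖corr ρ (condStoch D ΩB B) (condStoch D ΩC C)‖ ^ 2 ≤
      (corr ρ (condStoch D ΩB B) (condStoch D ΩB B)).re *
        (corr ρ (condStoch D ΩC C) (condStoch D ΩC C)).re := by
  obtain ⟨hρpsd, htr⟩ := hρ
  have hρH : ρᴴ = ρ := hρpsd.isHermitian
  set Xo := condStoch D ΩB B with hXo
  set Yo := condStoch D ΩC C with hYo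
  have hXH : Xoᴴ = Xo := condStoch_herm D hDpos ΩB B hB
  have hYH : Yoᴴ = Yo := condStoch_herm D hDpos ΩC C hC
  set a := (ρ * Xo).trace with ha
  set b := (ρ * Yo).trace with hb
  -- real expectations
  have hreal : ∀ P : Matrix (Fin n) (Fin n) ℂ, Pᴴ = P →
      star ((ρ * P).trace) = (ρ * P).trace := by
    intro P hP
    rw [← Matrix.trace_conjTranspose, Matrix.conjTranspose_mul, hP, hρH,
      Matrix.trace_mul_comm]
  set M := Xo - a • (1 : Matrix (Fin n) (Fin n) ℂ) with hM
  set N := Yo - b • (1 : Matrix (Fin n) (Fin n) ℂ) with hN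
  have hMH : Mᴴ = M := by
    rw [hM, Matrix.conjTranspose_sub, hXH, Matrix.conjTranspose_smul,
      Matrix.conjTranspose_one, hreal Xo hXH]
  have hNH : Nᴴ = N := by
    rw [hN, Matrix.conjTranspose_sub, hYH, Matrix.conjTranspose_smul,
      Matrix.conjTranspose_one, hreal Yo hYH]
  -- corr as trace of product of centered operators
  have hXY : corr ρ Xo Yo = (ρ * (M * N)).trace := by
    rw [hM, hN, center_trace htr, corr]; ring
  have hYX : corr ρ Yo Xo = (ρ * (N * M)).trace := by
    rw [hN, hM, center_trace htr, corr]; ring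
  have hXX : corr ρ Xo Xo = (ρ * (M * M)).trace := by
    rw [hM, center_trace htr, corr]; ring
  have hYY : corr ρ Yo Yo = (ρ * (N * N)).trace := by
    rw [hN, center_trace htr, corr]; ring
  -- conjugate of corr is corr with arguments swapped
  have hconj : (starRingEnd ℂ) (corr ρ Xo Yo) = corr ρ Yo Xo := by
    rw [hXY, hYX]
    calc (starRingEnd ℂ) ((ρ * (M * N)).trace) = ((ρ * (M * N))ᴴ).trace := by
          rw [Matrix.trace_conjTranspose]; rfl
      _ = ((N * M) * ρ).trace := by
          rw [Matrix.conjTranspose_mul, Matrix.conjTranspose_mul, hMH, hNH, hρH,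
            Matrix.mul_assoc]
      _ = (ρ * (N * M)).trace := by rw [Matrix.trace_mul_comm]
  -- trace of commutator
  have hcomm : (ρ * (Xo * Yo - Yo * Xo)).trace =
      corr ρ Xo Yo - (starRingEnd ℂ) (corr ρ Xo Yo) := by
    rw [hconj, Matrix.mul_sub, Matrix.trace_sub, corr, corr]
    ring
  constructor
  · -- the identity
    rw [hcomm, Complex.sub_conj]
    simp only [norm_mul, Complex.norm_I, Complex.norm_real, Real.norm_eq_abs, mul_one]
    rw [Complex.sq_norm, Complex.normSq_apply, mul_pow, _root_.sq_abs, _root_.sq_abs]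
    ring
  · -- Cauchy–Schwarz
    have := trace_cs hρpsd M N
    rw [hMH, hNH] at this
    rw [hXY, hXX, hYY]
    exact this
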